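/- Let 0 < max(r₁,r₃) < r₂, let L̲ be as in the definition (L̲ = 0 if r₁ = r₃, and L̲ = arccot(√((r₂-max(r₁,r₃))/|r₁-r₃|))/√(r₂-max(r₁,r₃)) otherwise), and let L > L̲. Then the function G(λ) = cot(L√(r₂+λ)) - (r₂+λ - √((r₁+λ)(r₃+λ)))/(√(r₂+λ)(√(-r₁-λ)+√(-r₃-λ))) has a unique zero in the interval (-r₂, min(-max(r₁,r₃), π²/L² - r₂)). -/

import Mathlib

open Real Set

noncomputable def arccot (x : ℝ) : ℝ := Real.pi / 2 - Real.arctan x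

noncomputable def Haux (r₁ r₂ r₃ L lam : ℝ) : ℝ :=
  L * Real.sqrt (r₂ + lam) - Real.arctan (Real.sqrt (-r₁ - lam) / Real.sqrt (r₂ + lam))
    - Real.arctan (Real.sqrt (-r₃ - lam) / Real.sqrt (r₂ + lam))

lemma Haux_lt {r₁ r₂ r₃ L x y : ℝ} (hL : 0 < L) (hx : -r₂ < x) (hxy : x < y)
    (hy1 : y ≤ -r₁) (hy3 : y ≤ -r₃) :
    Haux r₁ r₂ r₃ L x < Haux r₁ r₂ r₃ L y := by
  have hsx : 0 < Real.sqrt (r₂ + x) := Real.sqrt_pos.2 (by linarith)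
  have hss : Real.sqrt (r₂ + x) < Real.sqrt (r₂ + y) :=
    Real.sqrt_lt_sqrt (by linarith) (by linarith)
  have key : ∀ r : ℝ, y ≤ -r →
      Real.arctan (Real.sqrt (-r - y) / Real.sqrt (r₂ + y))
        < Real.arctan (Real.sqrt (-r - x) / Real.sqrt (r₂ + x)) := by
    intro r hr
    apply Real.arctan_strictMono
    have ha' : (0:ℝ) ≤ Real.sqrt (-r - y) := Real.sqrt_nonneg _
    have haa : Real.sqrt (-r - y) < Real.sqrt (-r - x) :=
      Real.sqrt_lt_sqrt (by linarith) (by linarith)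
    calc Real.sqrt (-r - y) / Real.sqrt (r₂ + y)
        ≤ Real.sqrt (-r - x) / Real.sqrt (r₂ + y) := by
          exact div_le_div_of_nonneg_right haa.le (Real.sqrt_nonneg _)
      _ < Real.sqrt (-r - x) / Real.sqrt (r₂ + x) := by
          apply div_lt_div_of_pos_left (by linarith) hsx hss
  have k1 := key r₁ hy1
  have k3 := key r₃ hy3
  have : L * Real.sqrt (r₂ + x) < L * Real.sqrt (r₂ + y) :=
    (mul_lt_mul_iff_right₀ hL).2 hss
  unfold Haux
  linarith

lemma Haux_continuousOn {r₁ r₂ r₃ L lo hi : ℝ} (hlo : -r₂ < lo) :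
    ContinuousOn (Haux r₁ r₂ r₃ L) (Icc lo hi) := by
  have hs : ∀ x ∈ Icc lo hi, Real.sqrt (r₂ + x) ≠ 0 := by
    intro x hx
    exact ne_of_gt (Real.sqrt_pos.2 (by have := hx.1; linarith))
  unfold Haux
  apply ContinuousOn.sub
  apply ContinuousOn.sub
  · exact (continuous_const.mul ((Real.continuous_sqrt).comp (by continuity))).continuousOn
  · exact Real.continuous_arctan.comp_continuousOn
      (ContinuousOn.div ((Real.continuous_sqrt).comp (by continuity)).continuousOn
        ((Real.continuous_sqrt).comp (by continuity)).continuousOn hs)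
  · exact Real.continuous_arctan.comp_continuousOn
      (ContinuousOn.div ((Real.continuous_sqrt).comp (by continuity)).continuousOn
        ((Real.continuous_sqrt).comp (by continuity)).continuousOn hs)

lemma my_cot_tan (z : ℝ) : Real.cot z = Real.tan (π/2 - z) := by
  rw [Real.tan_pi_div_two_sub, Real.cot_eq_cos_div_sin, Real.tan_eq_sin_div_cos, inv_div]

lemma cot_injOn_Ioo : InjOn Real.cot (Ioo 0 π) := by
  intro x hx y hy hxy
  simp only [mem_Ioo] at hx hy
  rw [my_cot_tan, my_cot_tan] at hxy
  have := Real.injOn_tan ⟨by linarith [hx.2], by linarith [hx.1]⟩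
    ⟨by linarith [hy.2], by linarith [hy.1]⟩ hxy
  linarith

lemma cot_arctan_add {x y : ℝ} (hx : 0 < x) (hy : 0 < y) :
    Real.cot (Real.arctan x + Real.arctan y) = (1 - x*y) / (x + y) := by
  have hP : (0:ℝ) < Real.sqrt (1 + x^2) := Real.sqrt_pos.2 (by positivity)
  have hQ : (0:ℝ) < Real.sqrt (1 + y^2) := Real.sqrt_pos.2 (by positivity)
  rw [Real.cot_eq_cos_div_sin, Real.cos_add, Real.sin_add, Real.sin_arctan, Real.cos_arctan,
    Real.sin_arctan, Real.cos_arctan]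
  have hden : x / √(1 + x ^ 2) * (1 / √(1 + y ^ 2)) + 1 / √(1 + x ^ 2) * (y / √(1 + y ^ 2))
      = (x + y) / (√(1 + x ^ 2) * √(1 + y ^ 2)) := by field_simp
  have hnum : 1 / √(1 + x ^ 2) * (1 / √(1 + y ^ 2)) - x / √(1 + x ^ 2) * (y / √(1 + y ^ 2))
      = (1 - x*y) / (√(1 + x ^ 2) * √(1 + y ^ 2)) := by field_simp
  rw [hden, hnum, div_div_div_cancel_right₀ (by positivity : √(1 + x ^ 2) * √(1 + y ^ 2) ≠ 0)]

lemma arctan_pos' {x : ℝ} (hx : 0 < x) : 0 < Real.arctan x := by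
  have := Real.arctan_strictMono hx
  rwa [Real.arctan_zero] at this

lemma G_zero_iff {r₁ r₂ r₃ L lam : ℝ} (hL : 0 < L) (hlam : -r₂ < lam)
    (h1 : lam < -r₁) (h3 : lam < -r₃) (hpi : lam < π^2/L^2 - r₂) :
    Real.cot (L * Real.sqrt (r₂ + lam))
        - (r₂ + lam - Real.sqrt ((r₁ + lam) * (r₃ + lam)))
          / (Real.sqrt (r₂ + lam) * (Real.sqrt (-r₁ - lam) + Real.sqrt (-r₃ - lam))) = 0
      ↔ Haux r₁ r₂ r₃ L lam = 0 := by
  set s := Real.sqrt (r₂ + lam) with hs_def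
  set a := Real.sqrt (-r₁ - lam) with ha_def
  set b := Real.sqrt (-r₃ - lam) with hb_def
  have hs : 0 < s := Real.sqrt_pos.2 (by linarith)
  have ha : 0 < a := Real.sqrt_pos.2 (by linarith)
  have hb : 0 < b := Real.sqrt_pos.2 (by linarith)
  have hs2 : s^2 = r₂ + lam := Real.sq_sqrt (by linarith)
  have hab : Real.sqrt ((r₁ + lam) * (r₃ + lam)) = a * b := by
    rw [show (r₁ + lam) * (r₃ + lam) = (-r₁ - lam) * (-r₃ - lam) by ring,
      Real.sqrt_mul (by linarith)]
  have hcot : Real.cot (Real.arctan (a/s) + Real.arctan (b/s))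
      = (r₂ + lam - a*b) / (s * (a + b)) := by
    rw [cot_arctan_add (by positivity) (by positivity), ← hs2]
    rw [div_eq_div_iff (by positivity) (by positivity)]
    field_simp
  have hθmem : Real.arctan (a/s) + Real.arctan (b/s) ∈ Ioo 0 π := by
    constructor
    · have := arctan_pos' (show (0:ℝ) < a/s by positivity)
      have := arctan_pos' (show (0:ℝ) < b/s by positivity)
      linarith
    · have h1' := Real.arctan_lt_pi_div_two (a/s)
      have h3' := Real.arctan_lt_pi_div_two (b/s)
      linarith
  have hLs : L * s ∈ Ioo 0 π := by
    constructor
    · positivity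
    · have hpl : 0 < π / L := by positivity
      have hlt : s^2 < (π/L)^2 := by rw [hs2, div_pow]; linarith
      have hsl : s < π / L := by nlinarith [hs.le, hpl]
      calc L * s < L * (π / L) := (mul_lt_mul_iff_right₀ hL).2 hsl
        _ = π := by field_simp
  rw [hab, ← hcot, sub_eq_zero]
  constructor
  · intro h
    have := cot_injOn_Ioo hLs hθmem h
    unfold Haux
    rw [← hs_def, ← ha_def, ← hb_def]
    linarith
  · intro h
    unfold Haux at h
    rw [← hs_def, ← ha_def, ← hb_def] at h
    have : L * s = Real.arctan (a/s) + Real.arctan (b/s) := by linarith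
    rw [this]

lemma aux_arctan {p q L : ℝ} (hp : 0 < p) (hq : 0 < q)
    (hL : (π/2 - Real.arctan (Real.sqrt (p/q))) / Real.sqrt p < L) :
    Real.arctan (Real.sqrt q / Real.sqrt p) < L * Real.sqrt p := by
  have hsp : 0 < Real.sqrt p := Real.sqrt_pos.2 hp
  have hpq : 0 < Real.sqrt (p/q) := Real.sqrt_pos.2 (by positivity)
  have h2 : Real.arctan (Real.sqrt q / Real.sqrt p) = π/2 - Real.arctan (Real.sqrt (p/q)) := by
    have e1 : Real.sqrt q / Real.sqrt p = Real.sqrt (q/p) := (Real.sqrt_div hq.le p).symm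
    have e2 : (Real.sqrt (p/q))⁻¹ = Real.sqrt (q/p) := by
      rw [← Real.sqrt_inv, inv_div]
    rw [e1, ← e2, Real.arctan_inv_of_pos hpq]
  rw [h2]
  exact (div_lt_iff₀ hsp).1 hL

theorem G_unique_zero (r₁ r₂ r₃ L : ℝ) (h1 : 0 < r₁) (h3 : 0 < r₃)
    (h2 : max r₁ r₃ < r₂)
    (Lbar : ℝ)
    (hLbar : Lbar = if r₁ = r₃ then 0 else
      arccot (Real.sqrt ((r₂ - max r₁ r₃) / |r₁ - r₃|))
        / Real.sqrt (r₂ - max r₁ r₃))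
    (hL : Lbar < L)
    (G : ℝ → ℝ)
    (hG : ∀ lam, G lam = Real.cot (L * Real.sqrt (r₂ + lam))
        - (r₂ + lam - Real.sqrt ((r₁ + lam) * (r₃ + lam)))
          / (Real.sqrt (r₂ + lam) * (Real.sqrt (-r₁ - lam) + Real.sqrt (-r₃ - lam)))) :
    ∃! lam : ℝ,
      lam ∈ Set.Ioo (-r₂) (min (-(max r₁ r₃)) (Real.pi ^ 2 / L ^ 2 - r₂)) ∧
        G lam = 0 := by
  set M := max r₁ r₃ with hM_def
  have hM1 : r₁ ≤ M := le_max_left _ _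
  have hM3 : r₃ ≤ M := le_max_right _ _
  have hMpos : 0 < M := lt_of_lt_of_le h1 hM1
  have hLpos : 0 < L := by
    by_cases heq : r₁ = r₃
    · rw [heq, if_pos rfl] at hLbar
      linarith
    · rw [if_neg heq] at hLbar
      have h0 : 0 < arccot (Real.sqrt ((r₂ - M) / |r₁ - r₃|)) := by
        unfold arccot
        linarith [Real.arctan_lt_pi_div_two (Real.sqrt ((r₂ - M) / |r₁ - r₃|))]
      have : 0 < Lbar := by
        rw [hLbar]
        exact div_pos h0 (Real.sqrt_pos.2 (by linarith))
      linarith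
  set lamB := min (-M) (π ^ 2 / L ^ 2 - r₂) with hlamB_def
  -- the left test point
  set ε := min ((r₂ - r₁)/2) (min ((r₂ - r₃)/2) (π^2/(16*L^2))) with hε_def
  have hε1 : ε ≤ (r₂ - r₁)/2 := min_le_left _ _
  have hε3 : ε ≤ (r₂ - r₃)/2 := le_trans (min_le_right _ _) (min_le_left _ _)
  have hεπ : ε ≤ π^2/(16*L^2) := le_trans (min_le_right _ _) (min_le_right _ _)
  have hεpos : 0 < ε := by
    apply lt_min (by linarith) (lt_min (by linarith) (by positivity))
  set lam₀ := -r₂ + ε with hlam₀_def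
  have hlam₀l : -r₂ < lam₀ := by rw [hlam₀_def]; linarith
  have hεM : ε ≤ (r₂ - M)/2 := by
    rcases max_cases r₁ r₃ with ⟨h, _⟩ | ⟨h, _⟩ <;> rw [hM_def, h]
    · exact hε1
    · exact hε3
  have hlam₀B : lam₀ < lamB := by
    apply lt_min
    · rw [hlam₀_def]; linarith
    · rw [hlam₀_def]
      have : π^2/(16*L^2) < π^2/L^2 := by
        apply div_lt_div_of_pos_left (by positivity) (by positivity) (by nlinarith)
      linarith
  -- H is negative at lam₀
  have hHneg : Haux r₁ r₂ r₃ L lam₀ < 0 := by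
    have hr2l : r₂ + lam₀ = ε := by rw [hlam₀_def]; ring
    have hsεpos : 0 < Real.sqrt ε := Real.sqrt_pos.2 hεpos
    have hLs : L * Real.sqrt ε ≤ π/4 := by
      have e : π^2/(16*L^2) = (π/(4*L))^2 := by field_simp; ring
      have : Real.sqrt ε ≤ π/(4*L) := by
        calc Real.sqrt ε ≤ Real.sqrt (π^2/(16*L^2)) := Real.sqrt_le_sqrt hεπ
          _ = π/(4*L) := by rw [e, Real.sqrt_sq (by positivity)]
      calc L * Real.sqrt ε ≤ L * (π/(4*L)) := (mul_le_mul_iff_right₀ hLpos).2 this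
        _ = π/4 := by field_simp
    have key : ∀ r : ℝ, ε ≤ (r₂ - r)/2 →
        π/4 ≤ Real.arctan (Real.sqrt (-r - lam₀) / Real.sqrt ε) := by
      intro r hr
      have h1' : ε ≤ -r - lam₀ := by rw [hlam₀_def]; linarith
      have h2' : Real.sqrt ε ≤ Real.sqrt (-r - lam₀) := Real.sqrt_le_sqrt h1'
      have h3' : (1:ℝ) ≤ Real.sqrt (-r - lam₀) / Real.sqrt ε :=
        (one_le_div hsεpos).2 h2'
      calc π/4 = Real.arctan 1 := Real.arctan_one.symm
        _ ≤ Real.arctan (Real.sqrt (-r - lam₀) / Real.sqrt ε) :=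
            Real.arctan_strictMono.monotone h3'
    have k1 := key r₁ hε1
    have k3 := key r₃ hε3
    unfold Haux
    rw [hr2l]
    linarith [Real.pi_pos]
  -- H is positive at lamB
  have hHpos : 0 < Haux r₁ r₂ r₃ L lamB := by
    rcases le_total (-M) (π ^ 2 / L ^ 2 - r₂) with hc | hc
    · -- lamB = -M
      have hB : lamB = -M := min_eq_left hc
      have hp : 0 < r₂ - M := by linarith
      have hsp : 0 < Real.sqrt (r₂ - M) := Real.sqrt_pos.2 hp
      have hr2 : r₂ + lamB = r₂ - M := by rw [hB]; ring
      have e1 : -r₁ - lamB = M - r₁ := by rw [hB]; ring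
      have e3 : -r₃ - lamB = M - r₃ := by rw [hB]; ring
      unfold Haux
      rw [hr2, e1, e3]
      by_cases heq : r₁ = r₃
      · have hMr : M = r₁ := by rw [hM_def, heq, max_self]
        rw [hMr, heq]
        simp only [sub_self, Real.sqrt_zero, zero_div, Real.arctan_zero, sub_zero]
        have : 0 < Real.sqrt (r₂ - r₃) := Real.sqrt_pos.2 (by linarith)
        positivity
      · rw [if_neg heq] at hLbar
        have habs : 0 < |r₁ - r₃| := abs_pos.2 (sub_ne_zero.2 heq)
        have hLb : (π/2 - Real.arctan (Real.sqrt ((r₂ - M)/|r₁ - r₃|)))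
            / Real.sqrt (r₂ - M) < L := by
          rw [hLbar] at hL
          exact hL
        have main := aux_arctan hp habs hLb
        rcases le_total r₁ r₃ with hle | hle
        · have hMr : M = r₃ := max_eq_right hle
          have habs' : |r₁ - r₃| = M - r₁ := by
            rw [hMr, abs_of_nonpos (by linarith)]; ring
          rw [hMr]
          simp only [sub_self, Real.sqrt_zero, zero_div, Real.arctan_zero, sub_zero]
          rw [← hMr, ← habs']
          linarith [main]
        · have hMr : M = r₁ := max_eq_left hle
          have habs' : |r₁ - r₃| = M - r₃ := by
            rw [hMr, abs_of_nonneg (by linarith)]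
          rw [hMr]
          simp only [sub_self, Real.sqrt_zero, zero_div, Real.arctan_zero, sub_zero]
          rw [← hMr, ← habs']
          linarith [main]
    · -- lamB = π²/L² - r₂
      have hB : lamB = π ^ 2 / L ^ 2 - r₂ := min_eq_right hc
      have hr2 : r₂ + lamB = (π/L)^2 := by rw [hB]; field_simp; ring
      unfold Haux
      rw [hr2, Real.sqrt_sq (by positivity)]
      have hLπ : L * (π/L) = π := by field_simp
      rw [hLπ]
      linarith [Real.arctan_lt_pi_div_two (Real.sqrt (-r₁ - lamB) / (π/L)),
        Real.arctan_lt_pi_div_two (Real.sqrt (-r₃ - lamB) / (π/L))]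
  -- existence by IVT
  have hcont : ContinuousOn (Haux r₁ r₂ r₃ L) (Icc lam₀ lamB) := Haux_continuousOn hlam₀l
  have hIV := intermediate_value_Ioo hlam₀B.le hcont
  have h0mem : (0:ℝ) ∈ Ioo (Haux r₁ r₂ r₃ L lam₀) (Haux r₁ r₂ r₃ L lamB) := ⟨hHneg, hHpos⟩
  obtain ⟨c, hc, hc0⟩ := hIV h0mem
  have hcIoo : c ∈ Ioo (-r₂) lamB := ⟨lt_trans hlam₀l hc.1, hc.2⟩
  have hBM : lamB ≤ -M := min_le_left _ _
  have hBπ : lamB ≤ π ^ 2 / L ^ 2 - r₂ := min_le_right _ _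
  have hiff : ∀ lam ∈ Ioo (-r₂) lamB, (G lam = 0 ↔ Haux r₁ r₂ r₃ L lam = 0) := by
    intro lam hlam
    rw [hG]
    exact G_zero_iff hLpos hlam.1 (by have := hlam.2; linarith)
      (by have := hlam.2; linarith) (by have := hlam.2; linarith)
  refine ⟨c, ⟨hcIoo, (hiff c hcIoo).2 hc0⟩, ?_⟩
  rintro lam ⟨hmem, hGlam⟩
  have hHlam : Haux r₁ r₂ r₃ L lam = 0 := (hiff lam hmem).1 hGlam
  rcases lt_trichotomy lam c with hlt | heq | hgt
  · exfalso
    have : Haux r₁ r₂ r₃ L lam < Haux r₁ r₂ r₃ L c :=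
      Haux_lt hLpos hmem.1 hlt (by linarith [hcIoo.2]) (by linarith [hcIoo.2])
    rw [hHlam, hc0] at this
    exact lt_irrefl 0 this
  · exact heq
  · exfalso
    have : Haux r₁ r₂ r₃ L c < Haux r₁ r₂ r₃ L lam :=
      Haux_lt hLpos hcIoo.1 hgt (by linarith [hmem.2]) (by linarith [hmem.2])
    rw [hHlam, hc0] at this
    exact lt_irrefl 0 this
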